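/- Let A, B, C be d×d complex matrices with equal diagonals. Then the rank (over ℂ) of X^{(3)}_{(A,B,C)} equals rank(B) + Σ_{1 ≤ i < j ≤ d} rank of the 2×2 matrix [[A_ij, C_ij], [C_ji, A_ji]]. -/

import Mathlib

open Matrix

/-- The LDOI matrix `X^{(3)}_{(A,B,C)}` associated to a triple of `d × d` matrices. -/
def X3 {d : ℕ} (A B C : Matrix (Fin d) (Fin d) ℂ) :
    Matrix (Fin d × Fin d) (Fin d × Fin d) ℂ :=
  Matrix.of fun p q =>
    if p.1 = q.1 ∧ p.2 = q.2 then A p.1 p.2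
    else if p.1 = p.2 ∧ q.1 = q.2 then B p.1 q.1
    else if p.1 = q.2 ∧ p.2 = q.1 then C p.1 q.1
    else 0


noncomputable def piSubEquiv {R : Type*} [Semiring R] {ι : Type*} {φ : ι → Type*}
    [∀ i, AddCommMonoid (φ i)] [∀ i, Module R (φ i)] (p : ∀ i, Submodule R (φ i)) :
    (Submodule.pi Set.univ p) ≃ₗ[R] Π i, p i where
  toFun x i := ⟨x.1 i, x.2 i (Set.mem_univ i)⟩
  invFun x := ⟨fun i => (x i).1, fun i _ => (x i).2⟩
  left_inv x := rfl
  right_inv x := rfl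
  map_add' x y := rfl
  map_smul' c x := rfl

lemma range_pi_comp_proj {R : Type*} [CommRing R] {ι : Type*} {φ ψ : ι → Type*}
    [∀ i, AddCommGroup (φ i)] [∀ i, Module R (φ i)]
    [∀ i, AddCommGroup (ψ i)] [∀ i, Module R (ψ i)]
    (f : ∀ i, φ i →ₗ[R] ψ i) :
    LinearMap.range (LinearMap.pi fun i => (f i) ∘ₗ LinearMap.proj i) =
      Submodule.pi Set.univ fun i => LinearMap.range (f i) := by
  ext x
  simp only [LinearMap.mem_range, Submodule.mem_pi, Set.mem_univ, forall_true_left]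
  constructor
  · rintro ⟨y, rfl⟩ i
    exact ⟨y i, rfl⟩
  · intro h
    choose y hy using h
    exact ⟨y, funext hy⟩

lemma rank_blockDiagonal'' {κ : Type*} [Fintype κ] [DecidableEq κ]
    {n : κ → Type*} [∀ k, Fintype (n k)] [∀ k, DecidableEq (n k)]
    (M : ∀ k, Matrix (n k) (n k) ℂ) :
    (blockDiagonal' M).rank = ∑ k, (M k).rank := by
  have key : (blockDiagonal' M).mulVecLin =
      (LinearEquiv.piCurry ℂ (fun (k : κ) (_ : n k) => ℂ)).symm.toLinearMap ∘ₗ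
        (LinearMap.pi fun k => (M k).mulVecLin ∘ₗ LinearMap.proj k) ∘ₗ
        (LinearEquiv.piCurry ℂ (fun (k : κ) (_ : n k) => ℂ)).toLinearMap := by
    apply LinearMap.ext
    intro x
    funext ⟨k, i⟩
    simp only [mulVecLin_apply, LinearMap.coe_comp, Function.comp_apply,
      LinearEquiv.coe_coe, LinearEquiv.piCurry_apply, LinearEquiv.piCurry_symm_apply,
      LinearMap.pi_apply, LinearMap.proj_apply, Sigma.uncurry, Sigma.curry]
    rw [mulVec, dotProduct, ← Finset.univ_sigma_univ, Finset.sum_sigma]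
    rw [Finset.sum_eq_single k]
    · simp only [mulVec, dotProduct, blockDiagonal'_apply_eq]; rfl
    · intro k' _ hk'
      apply Finset.sum_eq_zero
      intro j _
      rw [blockDiagonal'_apply_ne M _ _ (Ne.symm hk')]
      ring
    · simp
  rw [Matrix.rank, key]
  rw [LinearMap.range_comp, LinearMap.range_comp_of_range_eq_top _ (LinearEquiv.range _)]
  rw [range_pi_comp_proj, LinearEquiv.finrank_map_eq]
  rw [(piSubEquiv _).finrank_eq, Module.finrank_pi_fintype]
  rfl



variable {d : ℕ}

abbrev PairIdx (d : ℕ) := Option {p : Fin d × Fin d // p.1 < p.2}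

def bt (d : ℕ) : PairIdx d → Type
  | none => Fin d
  | some _ => Bool

instance : ∀ k : PairIdx d, Fintype (bt d k)
  | none => inferInstanceAs (Fintype (Fin d))
  | some _ => inferInstanceAs (Fintype Bool)

instance : ∀ k : PairIdx d, DecidableEq (bt d k)
  | none => inferInstanceAs (DecidableEq (Fin d))
  | some _ => inferInstanceAs (DecidableEq Bool)

def blk (A B C : Matrix (Fin d) (Fin d) ℂ) : ∀ k : PairIdx d, Matrix (bt d k) (bt d k) ℂ
  | none => B
  | some p => Matrix.of fun a b =>
      match a, b with
      | false, false => A p.1.1 p.1.2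
      | false, true  => C p.1.1 p.1.2
      | true,  false => C p.1.2 p.1.1
      | true,  true  => A p.1.2 p.1.1

def pairEquiv (d : ℕ) : (Σ k : PairIdx d, bt d k) ≃ Fin d × Fin d where
  toFun x :=
    match x with
    | ⟨none, i⟩ => (i, i)
    | ⟨some p, false⟩ => p.1
    | ⟨some p, true⟩ => (p.1.2, p.1.1)
  invFun q :=
    if h : q.1 < q.2 then ⟨some ⟨q, h⟩, false⟩
    else if h' : q.2 < q.1 then ⟨some ⟨(q.2, q.1), h'⟩, true⟩
    else ⟨none, q.1⟩
  left_inv x := by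
    obtain ⟨k, a⟩ := x
    match k, a with
    | none, i => change Fin d at i; simp
    | some ⟨⟨i, j⟩, h⟩, false =>
        simp only [h, dif_pos]
    | some ⟨⟨i, j⟩, h⟩, true =>
        have h2 : ¬ j < i := lt_asymm h
        dsimp only
        rw [dif_neg h2, dif_pos h]
  right_inv q := by
    obtain ⟨i, j⟩ := q
    by_cases h : i < j
    · simp [h]
    · by_cases h' : j < i
      · simp [h, h']
      · have : i = j := le_antisymm (not_lt.1 h') (not_lt.1 h)
        subst this
        simp [h]

lemma X3_eq (A B C : Matrix (Fin d) (Fin d) ℂ) (hdiag : ∀ i, A i i = B i i ∧ A i i = C i i) :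
    blockDiagonal' (blk A B C) = (X3 A B C).submatrix (pairEquiv d) (pairEquiv d) := by
  ext x y
  obtain ⟨k, a⟩ := x
  obtain ⟨k', b⟩ := y
  rw [submatrix_apply]
  by_cases hk : k = k'
  · subst hk
    rw [blockDiagonal'_apply_eq]
    match k, a, b with
    | none, i, j =>
        change Fin d at i j
        by_cases hij : i = j
        · subst hij
          simp [X3, blk, pairEquiv, (hdiag i).1]
        · simp [X3, blk, pairEquiv, hij]
    | some ⟨⟨i, j⟩, h⟩, a, b =>
        have hne : i ≠ j := ne_of_lt h
        cases a <;> cases b <;>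
          simp [X3, blk, pairEquiv, hne, hne.symm, ne_of_lt h] <;> rfl
  · rw [blockDiagonal'_apply_ne _ _ _ hk]
    symm
    match k, k', hk, a, b with
    | none, none, hk, _, _ => exact absurd rfl hk
    | none, some ⟨⟨i, j⟩, h⟩, _, a, b =>
        replace h : i < j := h
        cases b <;>
        · simp only [pairEquiv, X3, of_apply, Equiv.coe_fn_mk]
          split_ifs with h1 h2 h3 <;>
            first
            | rfl
            | (exfalso; (try dsimp only at *);
                simp only [Fin.ext_iff, Fin.lt_def, Prod.mk.injEq] at *; omega)
    | some ⟨⟨i, j⟩, h⟩, none, _, a, b =>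
        replace h : i < j := h
        cases a <;>
        · simp only [pairEquiv, X3, of_apply, Equiv.coe_fn_mk]
          split_ifs with h1 h2 h3 <;>
            first
            | rfl
            | (exfalso; (try dsimp only at *);
                simp only [Fin.ext_iff, Fin.lt_def, Prod.mk.injEq] at *; omega)
    | some ⟨⟨i, j⟩, hij⟩, some ⟨⟨k, l⟩, hkl⟩, hk, a, b =>
        have hne : ¬(i = k ∧ j = l) := by
          rintro ⟨rfl, rfl⟩
          exact hk rfl
        replace hij : i < j := hij
        replace hkl : k < l := hkl
        cases a <;> cases b <;>
        · simp only [pairEquiv, X3, of_apply, Equiv.coe_fn_mk]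
          split_ifs with h1 h2 h3 <;>
            first
            | rfl
            | (exfalso; (try dsimp only at *);
                simp only [Fin.ext_iff, Fin.lt_def, Prod.mk.injEq, not_and] at *; omega)

lemma blk_some_rank (A B C : Matrix (Fin d) (Fin d) ℂ) (p : {p : Fin d × Fin d // p.1 < p.2}) :
    (blk A B C (some p)).rank =
      (!![A p.1.1 p.1.2, C p.1.1 p.1.2; C p.1.2 p.1.1, A p.1.2 p.1.1] :
        Matrix (Fin 2) (Fin 2) ℂ).rank := by
  have : blk A B C (some p) =
      (!![A p.1.1 p.1.2, C p.1.1 p.1.2; C p.1.2 p.1.1, A p.1.2 p.1.1]).submatrix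
        finTwoEquiv.symm finTwoEquiv.symm := by
    ext a b
    cases a <;> cases b <;> rfl
  rw [this]
  exact rank_submatrix _ _ _

theorem stmt11 {d : ℕ} (A B C : Matrix (Fin d) (Fin d) ℂ)
    (hdiag : ∀ i, A i i = B i i ∧ A i i = C i i) :
    (X3 A B C).rank =
      B.rank + ∑ i : Fin d, ∑ j : Fin d,
        (if i < j then (!![A i j, C i j; C j i, A j i] : Matrix (Fin 2) (Fin 2) ℂ).rank
         else 0) := by
  have h1 : (X3 A B C).rank = ∑ k : PairIdx d, (blk A B C k).rank := by
    have h0 := rank_blockDiagonal'' (blk A B C)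
    rw [← h0, X3_eq A B C hdiag]
    exact (rank_submatrix _ _ _).symm
  rw [h1, Fintype.sum_option]
  congr 1
  have h2 : ∀ p : {p : Fin d × Fin d // p.1 < p.2},
      (blk A B C (some p)).rank =
        (fun q : Fin d × Fin d =>
          if q.1 < q.2 then
            (!![A q.1 q.2, C q.1 q.2; C q.2 q.1, A q.2 q.1] : Matrix (Fin 2) (Fin 2) ℂ).rank
          else 0) p.1 := by
    intro p
    rw [blk_some_rank]
    simp [p.2]
  rw [Finset.sum_congr rfl fun p _ => h2 p]
  rw [(Finset.sum_subtype (Finset.filter (fun q : Fin d × Fin d => q.1 < q.2) Finset.univ)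
    (by simp)
    (fun q : Fin d × Fin d => if q.1 < q.2 then
      (!![A q.1 q.2, C q.1 q.2; C q.2 q.1, A q.2 q.1] : Matrix (Fin 2) (Fin 2) ℂ).rank
      else 0)).symm]
  rw [Finset.sum_filter, Fintype.sum_prod_type]
  apply Finset.sum_congr rfl
  intro i _
  apply Finset.sum_congr rfl
  intro j _
  by_cases h : i < j <;> simp [h]
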